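/- (KL bound for Lipschitz logit maps.) Let E be a real normed vector space, V a nonempty finite type, L ≥ 0, and z : E → (V → ℝ) a logit map satisfying the Lipschitz condition (∑_{i ∈ V} (z θ₁ i − z θ₂ i)²)^(1/2) ≤ L * ‖θ₁ − θ₂‖ for all θ₁ θ₂ : E, where the norm on V → ℝ is Euclidean. Then for all θ₁ θ₂ : E, KL(softmax (z θ₁) ‖ softmax (z θ₂)) ≤ (L² / 4) * ‖θ₁ − θ₂‖². -/

import Mathlib

private lemma aux_deriv_le {f f' : ℝ → ℝ} (hf : ∀ t, HasDerivAt f (f' t) t)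
    {C : ℝ} (hC : ∀ t, f' t ≤ C) {a b : ℝ} (hab : a ≤ b) :
    f b - f a ≤ C * (b - a) := by
  rcases eq_or_lt_of_le hab with h | h
  · simp [h]
  · obtain ⟨c, _, hc⟩ := exists_hasDerivAt_eq_slope f f' h
      (fun t _ => (hf t).continuousAt.continuousWithinAt) (fun t _ => hf t)
    have hba : 0 < b - a := by linarith
    have h2 : (f b - f a) / (b - a) ≤ C := hc ▸ hC c
    calc f b - f a = ((f b - f a) / (b - a)) * (b - a) := by field_simp
    _ ≤ C * (b - a) := by nlinarith

private lemma aux_taylor {φ g h : ℝ → ℝ}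
    (hφ : ∀ t, HasDerivAt φ (g t) t) (hg : ∀ t, HasDerivAt g (h t) t)
    {C : ℝ} (hC : ∀ t, h t ≤ C) :
    φ 1 - φ 0 - g 0 ≤ C / 2 := by
  set F : ℝ → ℝ := fun t => φ t - (g 0 * t + C * t ^ 2 / 2) with hF
  have hFd : ∀ t, HasDerivAt F (g t - (g 0 + C * t)) t := by
    intro t
    have h2 : HasDerivAt (fun t : ℝ => g 0 * t) (g 0) t := by
      simpa using (hasDerivAt_id t).const_mul (g 0)
    have h3 : HasDerivAt (fun t : ℝ => C * t ^ 2 / 2) (C * t) t := by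
      have := ((hasDerivAt_pow 2 t).const_mul C).div_const 2
      refine this.congr_deriv ?_
      norm_num
      ring
    exact (hφ t).sub (h2.add h3)
  obtain ⟨c, hc, hcd⟩ := exists_hasDerivAt_eq_slope F _ one_pos
    (fun t _ => (hFd t).continuousAt.continuousWithinAt) (fun t _ => hFd t)
  have h01 : g c - g 0 ≤ C * c := by
    have := aux_deriv_le hg hC (le_of_lt hc.1)
    simpa using this
  have hFc : g c - (g 0 + C * c) ≤ 0 := by linarith
  rw [hcd] at hFc
  simp only [hF] at hFc
  have : φ 1 - (g 0 * 1 + C * 1 ^ 2 / 2) - (φ 0 - (g 0 * 0 + C * 0 ^ 2 / 2)) ≤ 0 := by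
    have h10 : (0:ℝ) < 1 - 0 := by norm_num
    nlinarith [hFc]
  nlinarith [this]

private lemma aux_var {V : Type*} [Fintype V] [Nonempty V] (d e : V → ℝ)
    (he : ∀ i, 0 < e i) :
    (∑ i, d i ^ 2 * e i) / (∑ i, e i) - ((∑ i, d i * e i) / (∑ i, e i)) ^ 2
      ≤ (∑ i, d i ^ 2) / 2 := by
  classical
  set S := ∑ i, e i with hSdef
  have hS : 0 < S := Finset.sum_pos (fun i _ => he i) Finset.univ_nonempty
  set w : V → ℝ := fun i => e i / S with hw
  have hw0 : ∀ i, 0 ≤ w i := fun i => div_nonneg (he i).le hS.le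
  have hw1 : ∑ i, w i = 1 := by
    rw [hw, ← Finset.sum_div]
    exact div_self hS.ne'
  have e1 : (∑ i, d i ^ 2 * e i) / S = ∑ i, w i * d i ^ 2 := by
    rw [Finset.sum_div]
    exact Finset.sum_congr rfl fun i _ => by rw [hw]; ring
  have e2 : (∑ i, d i * e i) / S = ∑ i, w i * d i := by
    rw [Finset.sum_div]
    exact Finset.sum_congr rfl fun i _ => by rw [hw]; ring
  rw [e1, e2]
  obtain ⟨i₀, -, hmax⟩ := Finset.exists_max_image Finset.univ d Finset.univ_nonempty
  obtain ⟨i₁, -, hmin⟩ := Finset.exists_min_image Finset.univ d Finset.univ_nonempty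
  set M := d i₀ with hM
  set m := d i₁ with hm
  set c : ℝ := (M + m) / 2 with hcdef
  set μ := ∑ i, w i * d i with hμ
  have expand : ∑ i, w i * (d i - c) ^ 2
      = ∑ i, w i * d i ^ 2 - 2 * c * μ + c ^ 2 := by
    have h : ∀ i ∈ Finset.univ, w i * (d i - c) ^ 2
        = w i * d i ^ 2 - 2 * c * (w i * d i) + c ^ 2 * w i := fun i _ => by ring
    rw [Finset.sum_congr rfl h, Finset.sum_add_distrib, Finset.sum_sub_distrib,
      ← Finset.mul_sum, ← Finset.mul_sum, hw1, ← hμ]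
    ring
  have stepA : ∑ i, w i * d i ^ 2 - μ ^ 2 ≤ ∑ i, w i * (d i - c) ^ 2 := by
    rw [expand]
    nlinarith [sq_nonneg (μ - c)]
  have stepB : ∑ i, w i * (d i - c) ^ 2 ≤ ((M - m) / 2) ^ 2 := by
    have each : ∀ i ∈ Finset.univ, w i * (d i - c) ^ 2 ≤ w i * ((M - m) / 2) ^ 2 := by
      intro i _
      apply mul_le_mul_of_nonneg_left _ (hw0 i)
      apply sq_le_sq'
      · have := hmin i (Finset.mem_univ i)
        rw [hcdef]; linarith
      · have := hmax i (Finset.mem_univ i)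
        rw [hcdef]; linarith
    calc ∑ i, w i * (d i - c) ^ 2 ≤ ∑ i, w i * ((M - m) / 2) ^ 2 :=
          Finset.sum_le_sum each
      _ = ((M - m) / 2) ^ 2 := by rw [← Finset.sum_mul, hw1, one_mul]
  have stepC : ((M - m) / 2) ^ 2 ≤ (∑ i, d i ^ 2) / 2 := by
    by_cases hii : i₀ = i₁
    · have hMm : M = m := by rw [hM, hm, hii]
      have : (0:ℝ) ≤ ∑ i, d i ^ 2 := Finset.sum_nonneg fun i _ => sq_nonneg _
      rw [hMm]
      simp
      linarith
    · have hsub : d i₀ ^ 2 + d i₁ ^ 2 ≤ ∑ i, d i ^ 2 := by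
        have := Finset.sum_le_sum_of_subset_of_nonneg
          (Finset.subset_univ ({i₀, i₁} : Finset V))
          (fun i _ _ => sq_nonneg (d i))
        rwa [Finset.sum_pair hii] at this
      nlinarith [sq_nonneg (M + m)]
  linarith

/-- KL bound for Lipschitz logit maps: if the logit map `z : E → (V → ℝ)` is `L`-Lipschitz
in the Euclidean norm on `V → ℝ`, then for all `θ₁ θ₂`,
`KL(softmax (z θ₁) ‖ softmax (z θ₂)) ≤ (L² / 4) * ‖θ₁ − θ₂‖²`. -/
theorem kl_softmax_le_of_lipschitz_logits
    {E : Type*} [NormedAddCommGroup E] [NormedSpace ℝ E]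
    {V : Type*} [Fintype V] [Nonempty V]
    (L : ℝ) (hL : 0 ≤ L) (z : E → V → ℝ)
    (hz : ∀ θ₁ θ₂ : E,
      Real.sqrt (∑ i, (z θ₁ i - z θ₂ i) ^ 2) ≤ L * ‖θ₁ - θ₂‖) :
    ∀ θ₁ θ₂ : E,
      ∑ i, (Real.exp (z θ₁ i) / ∑ j, Real.exp (z θ₁ j)) *
          Real.log ((Real.exp (z θ₁ i) / ∑ j, Real.exp (z θ₁ j)) /
            (Real.exp (z θ₂ i) / ∑ j, Real.exp (z θ₂ j))) ≤
        (L ^ 2 / 4) * ‖θ₁ - θ₂‖ ^ 2 := by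
  intro θ₁ θ₂
  classical
  set u : V → ℝ := fun i => z θ₂ i - z θ₁ i with hu
  set S : ℝ → ℝ := fun t => ∑ i, Real.exp (z θ₁ i + t * u i) with hSdef
  set N : ℝ → ℝ := fun t => ∑ i, u i * Real.exp (z θ₁ i + t * u i) with hNdef
  set N2 : ℝ → ℝ := fun t => ∑ i, u i ^ 2 * Real.exp (z θ₁ i + t * u i) with hN2def
  have hSpos : ∀ t, 0 < S t :=
    fun t => Finset.sum_pos (fun i _ => Real.exp_pos _) Finset.univ_nonempty
  have hbase : ∀ (i : V) (t : ℝ), HasDerivAt (fun t : ℝ => z θ₁ i + t * u i) (u i) t := by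
    intro i t
    simpa using (hasDerivAt_mul_const (u i)).const_add (z θ₁ i)
  have hSd : ∀ t, HasDerivAt S (N t) t := by
    intro t
    have : HasDerivAt (fun t => ∑ i, Real.exp (z θ₁ i + t * u i))
        (∑ i : V, Real.exp (z θ₁ i + t * u i) * u i) t :=
      HasDerivAt.fun_sum fun i _ => (hbase i t).exp
    rw [hSdef, hNdef]
    convert this using 1
    exact Finset.sum_congr rfl fun i _ => by ring
  have hNd : ∀ t, HasDerivAt N (N2 t) t := by
    intro t
    have : HasDerivAt (fun t => ∑ i, u i * Real.exp (z θ₁ i + t * u i))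
        (∑ i : V, u i * (Real.exp (z θ₁ i + t * u i) * u i)) t :=
      HasDerivAt.fun_sum fun i _ => ((hbase i t).exp).const_mul (u i)
    rw [hNdef, hN2def]
    convert this using 1
    exact Finset.sum_congr rfl fun i _ => by ring
  have hφd : ∀ t, HasDerivAt (fun t => Real.log (S t)) (N t / S t) t :=
    fun t => (hSd t).log (hSpos t).ne'
  have hgd : ∀ t, HasDerivAt (fun t => N t / S t)
      (N2 t / S t - (N t / S t) ^ 2) t := by
    intro t
    have := (hNd t).div (hSd t) (hSpos t).ne'
    refine this.congr_deriv ?_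
    have := (hSpos t).ne'
    field_simp
  have hC : ∀ t, N2 t / S t - (N t / S t) ^ 2 ≤ (∑ i, u i ^ 2) / 2 := by
    intro t
    exact aux_var u (fun i => Real.exp (z θ₁ i + t * u i)) (fun i => Real.exp_pos _)
  have key : Real.log (S 1) - Real.log (S 0) - N 0 / S 0 ≤ ((∑ i, u i ^ 2) / 2) / 2 :=
    aux_taylor hφd hgd hC
  -- Identify S 0, S 1, N 0
  have hS0 : S 0 = ∑ j, Real.exp (z θ₁ j) := by
    rw [hSdef]
    exact Finset.sum_congr rfl fun i _ => by norm_num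
  have hS1 : S 1 = ∑ j, Real.exp (z θ₂ j) := by
    rw [hSdef]
    exact Finset.sum_congr rfl fun i _ => by rw [hu]; ring_nf
  have hN0 : N 0 = ∑ i, u i * Real.exp (z θ₁ i) := by
    rw [hNdef]
    exact Finset.sum_congr rfl fun i _ => by norm_num
  set A := ∑ j, Real.exp (z θ₁ j) with hA
  set B := ∑ j, Real.exp (z θ₂ j) with hB
  have hApos : 0 < A := Finset.sum_pos (fun i _ => Real.exp_pos _) Finset.univ_nonempty
  have hBpos : 0 < B := Finset.sum_pos (fun i _ => Real.exp_pos _) Finset.univ_nonempty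
  -- rewrite the KL sum
  have hterm : ∀ i, (Real.exp (z θ₁ i) / A) *
      Real.log ((Real.exp (z θ₁ i) / A) / (Real.exp (z θ₂ i) / B))
      = (Real.exp (z θ₁ i) / A) * (Real.log B - Real.log A) - u i * Real.exp (z θ₁ i) / A := by
    intro i
    rw [Real.log_div (by positivity) (by positivity),
      Real.log_div (Real.exp_ne_zero _) hApos.ne',
      Real.log_div (Real.exp_ne_zero _) hBpos.ne',
      Real.log_exp, Real.log_exp, hu]
    ring
  have hsum1 : ∑ i, Real.exp (z θ₁ i) / A = 1 := by
    rw [← Finset.sum_div]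
    exact div_self hApos.ne'
  have hKL : ∑ i, (Real.exp (z θ₁ i) / A) *
      Real.log ((Real.exp (z θ₁ i) / A) / (Real.exp (z θ₂ i) / B))
      = Real.log (S 1) - Real.log (S 0) - N 0 / S 0 := by
    rw [Finset.sum_congr rfl fun i _ => hterm i, Finset.sum_sub_distrib,
      ← Finset.sum_mul, hsum1, one_mul, ← Finset.sum_div, hS0, hS1, hN0]
  rw [hKL]
  -- bound ∑ u² by (L‖θ₁-θ₂‖)²
  have hueq : ∑ i, u i ^ 2 = ∑ i, (z θ₁ i - z θ₂ i) ^ 2 :=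
    Finset.sum_congr rfl fun i _ => by rw [hu]; ring
  have hnn : 0 ≤ ∑ i, (z θ₁ i - z θ₂ i) ^ 2 :=
    Finset.sum_nonneg fun i _ => sq_nonneg _
  have hub : ∑ i, u i ^ 2 ≤ (L * ‖θ₁ - θ₂‖) ^ 2 := by
    rw [hueq, ← Real.sq_sqrt hnn]
    exact pow_le_pow_left₀ (Real.sqrt_nonneg _) (hz θ₁ θ₂) 2
  have : (L * ‖θ₁ - θ₂‖) ^ 2 = L ^ 2 * ‖θ₁ - θ₂‖ ^ 2 := by ring
  rw [this] at hub
  linarith
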